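/- Let V be a 4-dimensional vector space over the field ZMod 2 and let f be a nonzero alternating trilinear form on V (an alternating map from V × V × V to ZMod 2). Then the nucleus N = {v ∈ V | f(v, w, u) = 0 for all w, u ∈ V} is a 1-dimensional subspace of V, and there exists a basis (a, b, c, d) of V such that f(a, b, c) = 1 and d ∈ N (so N = {0, d}). -/

import Mathlib

open Submodule Module

section Stmt6Aux
variable {V : Type*} [AddCommGroup V] [Module (ZMod 2) V]
variable (f : AlternatingMap (ZMod 2) V (ZMod 2) (Fin 3))

private lemma upd0' (v w u x : V) : Function.update ![v,w,u] (0:Fin 3) x = ![x,w,u] := by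
  funext i; fin_cases i <;> simp
private lemma upd1' (v w u x : V) : Function.update ![v,w,u] (1:Fin 3) x = ![v,x,u] := by
  funext i; fin_cases i <;> simp
private lemma upd2' (v w u x : V) : Function.update ![v,w,u] (2:Fin 3) x = ![v,w,x] := by
  funext i; fin_cases i <;> simp

private lemma add0' (x x' y z : V) : f ![x+x',y,z] = f ![x,y,z] + f ![x',y,z] := by
  have h := f.map_update_add ![x,y,z] 0 x x'
  simpa [upd0'] using h
private lemma add1' (x y y' z : V) : f ![x,y+y',z] = f ![x,y,z] + f ![x,y',z] := by
  have h := f.map_update_add ![x,y,z] 1 y y'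
  simpa [upd1'] using h
private lemma add2' (x y z z' : V) : f ![x,y,z+z'] = f ![x,y,z] + f ![x,y,z'] := by
  have h := f.map_update_add ![x,y,z] 2 z z'
  simpa [upd2'] using h
private lemma smul0' (t : ZMod 2) (x y z : V) : f ![t • x,y,z] = t * f ![x,y,z] := by
  have h := f.map_update_smul ![x,y,z] 0 t x
  simpa [upd0', smul_eq_mul] using h
private lemma smul1' (t : ZMod 2) (x y z : V) : f ![x,t • y,z] = t * f ![x,y,z] := by
  have h := f.map_update_smul ![x,y,z] 1 t y
  simpa [upd1', smul_eq_mul] using h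
private lemma smul2' (t : ZMod 2) (x y z : V) : f ![x,y,t • z] = t * f ![x,y,z] := by
  have h := f.map_update_smul ![x,y,z] 2 t z
  simpa [upd2', smul_eq_mul] using h
private lemma zro0' (y z : V) : f ![0,y,z] = 0 :=
  f.map_coord_zero (m := ![0,y,z]) 0 rfl
private lemma zro1' (x z : V) : f ![x,0,z] = 0 :=
  f.map_coord_zero (m := ![x,0,z]) 1 rfl
private lemma zro2' (x y : V) : f ![x,y,0] = 0 :=
  f.map_coord_zero (m := ![x,y,0]) 2 rfl
private lemma eq01' (x z : V) : f ![x,x,z] = 0 :=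
  f.map_eq_zero_of_eq _ (i := 0) (j := 1) rfl (by decide)
private lemma eq02' (x y : V) : f ![x,y,x] = 0 :=
  f.map_eq_zero_of_eq _ (i := 0) (j := 2) rfl (by decide)
private lemma eq12' (x y : V) : f ![x,y,y] = 0 :=
  f.map_eq_zero_of_eq _ (i := 1) (j := 2) rfl (by decide)
private lemma swap01' (x y z : V) : f ![y,x,z] = f ![x,y,z] := by
  have h := f.map_swap ![x,y,z] (show (0:Fin 3) ≠ 1 by decide)
  have e : ![x,y,z] ∘ Equiv.swap (0:Fin 3) 1 = ![y,x,z] := by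
    funext i; fin_cases i <;> simp [Equiv.swap_apply_def]
  rw [e] at h
  rw [h, CharTwo.neg_eq]
private lemma swap12' (x y z : V) : f ![x,z,y] = f ![x,y,z] := by
  have h := f.map_swap ![x,y,z] (show (1:Fin 3) ≠ 2 by decide)
  have e : ![x,y,z] ∘ Equiv.swap (1:Fin 3) 2 = ![x,z,y] := by
    funext i; fin_cases i <;> simp [Equiv.swap_apply_def]
  rw [e] at h
  rw [h, CharTwo.neg_eq]

private lemma nucleus_ext (e : Basis (Fin 4) (ZMod 2) V) (v : V)
    (h : ∀ i j, f ![v, e i, e j] = 0) (w u : V) : f ![v, w, u] = 0 := by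
  have hsp : ∀ x : V, x ∈ span (ZMod 2) (Set.range e) := fun x => by
    rw [e.span_eq]; trivial
  have step1 : ∀ w : V, ∀ j : Fin 4, f ![v, w, e j] = 0 := by
    intro w
    refine span_induction (p := fun w _ => ∀ j, f ![v, w, e j] = 0) ?_ ?_ ?_ ?_ (hsp w)
    · rintro _ ⟨i, rfl⟩ j; exact h i j
    · intro j; exact zro1' f v (e j)
    · intro x y _ _ hx hy j; rw [add1', hx, hy, add_zero]
    · intro t x _ hx j; rw [smul1', hx j, mul_zero]
  refine span_induction (p := fun u _ => f ![v, w, u] = 0) ?_ ?_ ?_ ?_ (hsp u)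
  · rintro _ ⟨j, rfl⟩; exact step1 w j
  · exact zro2' f v w
  · intro x y _ _ hx hy; rw [add2', hx, hy, add_zero]
  · intro t x _ hx; rw [smul2', hx, mul_zero]

end Stmt6Aux

/-- The Lemma at the start of Section 3.2: if `V` is a 4-dimensional `F₂`-vector space
with a nonzero alternating trilinear form `f`, then the nucleus
`N = {v | f(v,·,·) = 0}` is 1-dimensional, and there is a basis `(a,b,c,d)` of `V`
with `f(a,b,c) = 1` and `d ∈ N`. -/
theorem stmt6 (V : Type*) [AddCommGroup V] [Module (ZMod 2) V]
    (hdim : Module.finrank (ZMod 2) V = 4)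
    (f : AlternatingMap (ZMod 2) V (ZMod 2) (Fin 3)) (hf : f ≠ 0) :
    ∃ N : Submodule (ZMod 2) V,
      (∀ v : V, v ∈ N ↔ ∀ w u : V, f ![v, w, u] = 0) ∧
      Module.finrank (ZMod 2) N = 1 ∧
      ∃ b : Basis (Fin 4) (ZMod 2) V, f ![b 0, b 1, b 2] = 1 ∧ b 3 ∈ N := by
  classical
  have : FiniteDimensional (ZMod 2) V := FiniteDimensional.of_finrank_pos (by omega)
  have hz2 : ∀ t : ZMod 2, t = 0 ∨ t = 1 := by decide
  have hadd2 : ∀ x : V, x + x = 0 := by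
    intro x
    have : ((2 : ZMod 2)) • x = 0 := by
      have h2 : (2 : ZMod 2) = 0 := by decide
      rw [h2, zero_smul]
    rwa [two_smul] at this
  -- get a, b, c with f(a,b,c) = 1
  obtain ⟨m, hm⟩ : ∃ m, f m ≠ 0 := by
    by_contra h
    push_neg at h
    exact hf (AlternatingMap.ext fun m => by rw [h m]; rfl)
  set a := m 0 with ha
  set b := m 1 with hb
  set c := m 2 with hc
  have hmeq : m = ![a, b, c] := by
    funext i; fin_cases i <;> rfl
  have habc : f ![a, b, c] = 1 := by
    rw [← hmeq]
    rcases hz2 (f m) with h | h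
    · exact absurd h hm
    · exact h
  have hbac : f ![b, a, c] = 1 := by rw [swap01', habc]
  have hcab : f ![c, a, b] = 1 := by rw [swap01', swap12', habc]
  -- linear combinations of a,b,c must vanish coefficient-wise
  have hcoef : ∀ g0 g1 g2 : ZMod 2, g0 • a + g1 • b + g2 • c = 0 →
      g0 = 0 ∧ g1 = 0 ∧ g2 = 0 := by
    intro g0 g1 g2 hg
    have e0 : f ![g0 • a + g1 • b + g2 • c, b, c] = 0 := by rw [hg]; exact zro0' f b c
    have e1 : f ![g0 • a + g1 • b + g2 • c, a, c] = 0 := by rw [hg]; exact zro0' f a c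
    have e2 : f ![g0 • a + g1 • b + g2 • c, a, b] = 0 := by rw [hg]; exact zro0' f a b
    simp only [add0' f, smul0' f] at e0 e1 e2
    rw [habc, eq01', eq02', mul_one, mul_zero, mul_zero, add_zero, add_zero] at e0
    rw [hbac, eq01', eq02', mul_one, mul_zero, mul_zero, zero_add, add_zero] at e1
    rw [hcab, eq01', eq02', mul_one, mul_zero, mul_zero, zero_add, zero_add] at e2
    exact ⟨e0, e1, e2⟩
  have li3 : LinearIndependent (ZMod 2) ![a, b, c] := by
    rw [Fintype.linearIndependent_iff]
    intro g hg i
    rw [Fin.sum_univ_three] at hg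
    simp only [Matrix.cons_val_zero, Matrix.cons_val_one, Matrix.head_cons,
      Matrix.cons_val_two, Matrix.tail_cons] at hg
    obtain ⟨h0, h1, h2⟩ := hcoef _ _ _ hg
    fin_cases i <;> assumption
  -- find d' outside the span of a, b, c
  obtain ⟨d', hd'⟩ : ∃ d', d' ∉ span (ZMod 2) (Set.range ![a, b, c]) := by
    by_contra h
    push_neg at h
    have htop : span (ZMod 2) (Set.range ![a, b, c]) = ⊤ := eq_top_iff'.2 h
    have h3 : finrank (ZMod 2) (span (ZMod 2) (Set.range ![a, b, c])) = 3 := by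
      rw [finrank_span_eq_card li3]; simp
    rw [htop, finrank_top, hdim] at h3
    omega
  have hmem3 : ∀ g0 g1 g2 : ZMod 2,
      g0 • a + g1 • b + g2 • c ∈ span (ZMod 2) (Set.range ![a, b, c]) := by
    intro g0 g1 g2
    have hA : a ∈ span (ZMod 2) (Set.range ![a, b, c]) := subset_span ⟨0, rfl⟩
    have hB : b ∈ span (ZMod 2) (Set.range ![a, b, c]) := subset_span ⟨1, rfl⟩
    have hC : c ∈ span (ZMod 2) (Set.range ![a, b, c]) := subset_span ⟨2, rfl⟩
    exact add_mem (add_mem (smul_mem _ _ hA) (smul_mem _ _ hB)) (smul_mem _ _ hC)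
  have li4 : LinearIndependent (ZMod 2) ![a, b, c, d'] := by
    rw [Fintype.linearIndependent_iff]
    intro g hg i
    rw [Fin.sum_univ_four] at hg
    simp only [Matrix.cons_val_zero, Matrix.cons_val_one, Matrix.head_cons,
      Matrix.cons_val_two, Matrix.tail_cons, Matrix.cons_val_three] at hg
    have hg3 : g 3 = 0 := by
      rcases hz2 (g 3) with h | h
      · exact h
      · exfalso
        rw [h, one_smul] at hg
        have : d' = g 0 • a + g 1 • b + g 2 • c := by
          have := congrArg (fun x => x + d') hg
          simp only [zero_add] at this
          rw [add_assoc, hadd2 d', add_zero] at this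
          exact this.symm
        exact hd' (this ▸ hmem3 (g 0) (g 1) (g 2))
    rw [hg3, zero_smul, add_zero] at hg
    obtain ⟨h0, h1, h2⟩ := hcoef _ _ _ hg
    fin_cases i <;> assumption
  -- adjust d' into the nucleus
  set p := f ![b, c, d'] with hp
  set q := f ![a, c, d'] with hq
  set r := f ![a, b, d'] with hr
  set d := d' + (p • a + (q • b + r • c)) with hd
  have hd'bc : f ![d', b, c] = p := by rw [swap01', swap12', hp]
  have hd'ac : f ![d', a, c] = q := by rw [swap01', swap12', hq]
  have hd'ab : f ![d', a, b] = r := by rw [swap01', swap12', hr]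
  clear_value d
  have hexp : ∀ x y : V, f ![d, x, y] =
      f ![d', x, y] + (p * f ![a, x, y] + (q * f ![b, x, y] + r * f ![c, x, y])) := by
    intro x y
    rw [hd]
    simp only [add0' f, smul0' f]
  have hdab : f ![d, a, b] = 0 := by
    rw [hexp, hd'ab, eq01', eq02', hcab, mul_zero, mul_zero, mul_one, zero_add, zero_add,
      CharTwo.add_self_eq_zero]
  have hdac : f ![d, a, c] = 0 := by
    rw [hexp, hd'ac, eq01', eq02', hbac, mul_zero, mul_zero, mul_one, zero_add, add_zero,
      CharTwo.add_self_eq_zero]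
  have hdbc : f ![d, b, c] = 0 := by
    rw [hexp, hd'bc, eq01', eq02', habc, mul_zero, mul_zero, mul_one, add_zero, add_zero,
      CharTwo.add_self_eq_zero]
  -- the final basis (a, b, c, d)
  have hspan4 : (⊤ : Submodule (ZMod 2) V) ≤ span (ZMod 2) (Set.range ![a, b, c, d]) := by
    have hA : a ∈ span (ZMod 2) (Set.range ![a, b, c, d]) := subset_span ⟨0, rfl⟩
    have hB : b ∈ span (ZMod 2) (Set.range ![a, b, c, d]) := subset_span ⟨1, rfl⟩
    have hC : c ∈ span (ZMod 2) (Set.range ![a, b, c, d]) := subset_span ⟨2, rfl⟩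
    have hD : d ∈ span (ZMod 2) (Set.range ![a, b, c, d]) := subset_span ⟨3, rfl⟩
    have hD' : d' ∈ span (ZMod 2) (Set.range ![a, b, c, d]) := by
      have : d' = d + (p • a + (q • b + r • c)) := by
        rw [hd, add_assoc, hadd2 (p • a + (q • b + r • c)), add_zero]
      rw [this]
      exact add_mem hD (add_mem (smul_mem _ _ hA) (add_mem (smul_mem _ _ hB) (smul_mem _ _ hC)))
    have hbasis' : span (ZMod 2) (Set.range ![a, b, c, d']) = ⊤ :=
      li4.span_eq_top_of_card_eq_finrank (by simp [hdim])
    rw [← hbasis']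
    apply span_le.2
    rintro _ ⟨i, rfl⟩
    fin_cases i <;>
      simp only [Matrix.cons_val_zero, Matrix.cons_val_one, Matrix.head_cons,
        Matrix.cons_val_two, Matrix.tail_cons, Matrix.cons_val_three, Fin.isValue] <;>
      first | exact hA | exact hB | exact hC | exact hD'
  set e : Basis (Fin 4) (ZMod 2) V :=
    basisOfTopLeSpanOfCardEqFinrank ![a, b, c, d] hspan4 (by simp [hdim]) with he
  have hecoe : ⇑e = ![a, b, c, d] := coe_basisOfTopLeSpanOfCardEqFinrank _ _ _
  have he0 : e 0 = a := by rw [hecoe]; rfl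
  have he1 : e 1 = b := by rw [hecoe]; rfl
  have he2 : e 2 = c := by rw [hecoe]; rfl
  have he3 : e 3 = d := by rw [hecoe]; rfl
  -- the nucleus as a submodule
  set N : Submodule (ZMod 2) V :=
    { carrier := {v | ∀ w u : V, f ![v, w, u] = 0}
      add_mem' := by
        intro x y hx hy w u
        rw [add0', hx, hy, add_zero]
      zero_mem' := fun w u => zro0' f w u
      smul_mem' := by
        intro t x hx w u
        rw [smul0', hx, mul_zero] } with hN
  have hmemN : ∀ v : V, v ∈ N ↔ ∀ w u : V, f ![v, w, u] = 0 := fun v => Iff.rfl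
  -- d is in the nucleus
  have hdN : d ∈ N := by
    intro w u
    refine nucleus_ext f e d ?_ w u
    intro i j
    fin_cases i <;> fin_cases j <;>
      simp only [hecoe, Matrix.cons_val_zero, Matrix.cons_val_one, Matrix.head_cons,
        Matrix.cons_val_two, Matrix.tail_cons, Matrix.cons_val_three, Fin.isValue] <;>
      first
        | exact eq01' f _ _
        | exact eq02' f _ _
        | exact eq12' f _ _
        | exact hdab
        | exact hdac
        | exact hdbc
        | (rw [swap12' f]; first | exact hdab | exact hdac | exact hdbc)
  -- the nucleus is exactly the span of d
  have hNspan : N = span (ZMod 2) {d} := by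
    apply le_antisymm
    · intro v hv
      have hrepr : v = e.repr v 0 • a + e.repr v 1 • b + e.repr v 2 • c + e.repr v 3 • d := by
        have hs := e.sum_repr v
        rw [Fin.sum_univ_four, he0, he1, he2, he3] at hs
        exact hs.symm
      have hx0 : e.repr v 0 = 0 := by
        have h0 : f ![v, b, c] = 0 := hv b c
        rw [hrepr] at h0
        simp only [add0' f, smul0' f] at h0
        rw [habc, eq01', eq02', hdN b c, mul_one, mul_zero, mul_zero, mul_zero,
          add_zero, add_zero, add_zero] at h0
        exact h0
      have hx1 : e.repr v 1 = 0 := by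
        have h0 : f ![v, a, c] = 0 := hv a c
        rw [hrepr] at h0
        simp only [add0' f, smul0' f] at h0
        rw [hbac, eq01', eq02', hdN a c, mul_one, mul_zero, mul_zero, mul_zero,
          zero_add, add_zero, add_zero] at h0
        exact h0
      have hx2 : e.repr v 2 = 0 := by
        have h0 : f ![v, a, b] = 0 := hv a b
        rw [hrepr] at h0
        simp only [add0' f, smul0' f] at h0
        rw [hcab, eq01', eq02', hdN a b, mul_one, mul_zero, mul_zero, mul_zero,
          zero_add, zero_add, add_zero] at h0
        exact h0
      have : v = e.repr v 3 • d := by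
        conv_lhs => rw [hrepr]
        rw [hx0, hx1, hx2, zero_smul, zero_smul, zero_smul, zero_add, zero_add, zero_add]
      exact mem_span_singleton.2 ⟨e.repr v 3, this.symm⟩
    · rw [span_le, Set.singleton_subset_iff]
      exact hdN
  have hdne : d ≠ 0 := by
    have := e.ne_zero 3
    rwa [he3] at this
  refine ⟨N, hmemN, ?_, e, ?_, ?_⟩
  · rw [hNspan]
    exact finrank_span_singleton hdne
  · rw [he0, he1, he2]; exact habc
  · rw [he3]; exact hdN
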